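/- Let m ≥ 1, d ≥ 0, p ≥ 0, t ≥ 1 be integers, let h_0, …, h_d be integers (with the convention h_j = 0 for j < 0 or j > d), let β_0, …, β_p be integers, and assume the identity (1−z)^m · (Σ_{j=0}^{d} h_j z^j) = 1 + Σ_{i=0}^{p} (−1)^{i+1} β_i z^{t+i} holds in ℤ[z]. If moreover β_i ≥ C(p,i) for every 0 ≤ i ≤ p, then Σ_{ℓ=0}^{t+i} (−1)^{ℓ+i+1} C(m,ℓ) h_{t+i−ℓ} ≥ C(p,i) for every 0 ≤ i ≤ p. (This is Corollary 3.6: the h-vector of a simplicial complex whose Stanley–Reisner ring has a t-linear free resolution of projective dimension p satisfies these binomial inequalities.) -/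
import Mathlib


open Polynomial Finset

lemma one_sub_X_pow_eq (m : ℕ) :
    (1 - X : ℤ[X]) ^ m = ∑ k ∈ range (m + 1), C ((-1 : ℤ) ^ k * m.choose k) * X ^ k := by
  rw [show (1 - X : ℤ[X]) = -X + 1 by ring, add_pow]
  refine Finset.sum_congr rfl fun b hb => ?_
  rw [neg_pow]
  simp [C_mul, C_pow]
  ring

lemma coeff_one_sub_X_pow (m ℓ : ℕ) :
    ((1 - X : ℤ[X]) ^ m).coeff ℓ = (-1) ^ ℓ * m.choose ℓ := by
  rw [one_sub_X_pow_eq]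
  simp only [finset_sum_coeff, coeff_C_mul, coeff_X_pow, mul_ite, mul_one, mul_zero]
  rw [Finset.sum_ite_eq (range (m+1)) ℓ]
  by_cases hℓ : ℓ ≤ m
  · simp [Nat.lt_succ_iff, hℓ]
  · simp [Nat.lt_succ_iff, hℓ, Nat.choose_eq_zero_of_lt (by omega : m < ℓ)]

/-- Corollary 3.6: binomial inequalities for the h-vector of a t-linear resolution. -/
theorem linear_resolution_h_vector_inequalities (m d p t : ℕ) (hm : 1 ≤ m) (ht : 1 ≤ t)
    (h : ℕ → ℤ) (hh : ∀ j, d < j → h j = 0)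
    (β : ℕ → ℤ)
    (hid : (1 - X : ℤ[X]) ^ m * ∑ j ∈ range (d + 1), C (h j) * X ^ j
      = 1 + ∑ i ∈ range (p + 1), (-1) ^ (i + 1) * C (β i) * X ^ (t + i))
    (hβ : ∀ i ≤ p, (p.choose i : ℤ) ≤ β i) :
    ∀ i ≤ p, (p.choose i : ℤ) ≤ ∑ ℓ ∈ range (t + i + 1),
      (-1) ^ (ℓ + i + 1) * (m.choose ℓ : ℤ) * h (t + i - ℓ) := by
  intro i hi
  have hcoeffq : ∀ k, ((∑ j ∈ range (d + 1), C (h j) * X ^ j).coeff k) = h k := by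
    intro k
    simp only [finset_sum_coeff, coeff_C_mul, coeff_X_pow, mul_ite, mul_one, mul_zero]
    rw [Finset.sum_ite_eq (range (d+1)) k]
    by_cases hk : k ≤ d
    · simp [Nat.lt_succ_iff, hk]
    · simp [Nat.lt_succ_iff, hk, hh k (by omega)]
  have key := congrArg (fun q : ℤ[X] => q.coeff (t + i)) hid
  simp only [coeff_mul, Nat.sum_antidiagonal_eq_sum_range_succ_mk, coeff_add] at key
  rw [Polynomial.coeff_one] at key
  simp only [coeff_one_sub_X_pow, hcoeffq] at key
  have hrhs : (∑ i' ∈ range (p + 1), (-1) ^ (i' + 1) * C (β i') * X ^ (t + i')).coeff (t + i)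
      = (-1) ^ (i + 1) * β i := by
    simp only [show ∀ i' : ℕ, ((-1 : ℤ[X]) ^ (i' + 1) * C (β i') * X ^ (t + i'))
        = C ((-1 : ℤ) ^ (i' + 1) * β i') * X ^ (t + i') by intro i'; simp [C_mul, C_pow]]
    simp only [finset_sum_coeff, coeff_C_mul, coeff_X_pow, mul_ite, mul_one, mul_zero]
    have : ∀ i' : ℕ, (t + i = t + i') ↔ (i' = i) := by omega
    simp only [this]
    rw [Finset.sum_ite_eq' (range (p+1)) i]
    simp [Nat.lt_succ_iff, hi]
  rw [hrhs] at key
  simp only [if_neg (by omega : ¬ t + i = 0), zero_add] at key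
  have heq : ∑ ℓ ∈ range (t + i + 1), (-1) ^ (ℓ + i + 1) * (m.choose ℓ : ℤ) * h (t + i - ℓ)
      = (-1) ^ (i + 1) * ∑ ℓ ∈ range (t + i + 1), (-1) ^ ℓ * (m.choose ℓ : ℤ) * h (t + i - ℓ) := by
    rw [Finset.mul_sum]
    refine Finset.sum_congr rfl fun ℓ _ => ?_
    rw [show ℓ + i + 1 = (i + 1) + ℓ by omega, pow_add]
    ring
  rw [heq, key, ← mul_assoc, ← pow_add]
  rw [show (i + 1) + (i + 1) = 2 * (i + 1) by omega, pow_mul]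
  simpa using hβ i hi
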